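/- Let n ≥ 2, let T be a partition of {1,…,n} into k ≥ 2 blocks, and let c ∈ [−1/(k−1), 1]. For every n×n complex positive semidefinite matrix A, the matrix f_T[A] defined by (f_T[A])_{ij} = a_{ij} if i and j lie in the same block of T and (f_T[A])_{ij} = c·a_{ij} otherwise, is positive semidefinite. -/

import Mathlib

open scoped ComplexOrder
open Matrix

lemma psd_real_smul {m : Type*} [Fintype m] (r : ℝ) (hr : 0 ≤ r)
    {M : Matrix m m ℂ} (hM : M.PosSemidef) : ((r : ℂ) • M).PosSemidef := by
  constructor
  · unfold Matrix.IsHermitian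
    rw [conjTranspose_smul, hM.1.eq]
    simp [Complex.conj_ofReal]
  · intro x
    exact (hM.smul (a := (r : ℂ)) (Complex.zero_le_real.mpr hr)).2 x

lemma psd_sum {m : Type*} [Fintype m] {ι : Type*} (s : Finset ι)
    (f : ι → Matrix m m ℂ) (h : ∀ i ∈ s, (f i).PosSemidef) :
    (∑ i ∈ s, f i).PosSemidef := by
  induction s using Finset.cons_induction with
  | empty => simpa using Matrix.PosSemidef.zero
  | cons a s ha ih =>
    rw [Finset.sum_cons]
    exact (h a (Finset.mem_cons_self a s)).add (ih fun i hi => h i (Finset.mem_cons_of_mem hi))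

theorem partition_scale_posSemidef (n k : ℕ) (hn : 2 ≤ n) (hk : 2 ≤ k)
    (π : Fin n → Fin k) (hπ : Function.Surjective π)
    (c : ℝ) (hc : c ∈ Set.Icc (-1 / (k - 1) : ℝ) 1)
    (A : Matrix (Fin n) (Fin n) ℂ) (hA : A.PosSemidef) :
    (Matrix.of fun i j => if π i = π j then A i j else (c : ℂ) * A i j).PosSemidef := by
  obtain ⟨hc1, hc2⟩ := hc
  have hk1 : (0:ℝ) < (k:ℝ) - 1 := by
    have : (2:ℝ) ≤ (k:ℝ) := by exact_mod_cast hk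
    linarith
  have hkpos : (0:ℝ) < (k:ℝ) := by linarith
  have hkC : ((k:ℂ)) ≠ 0 := by
    exact_mod_cast Nat.cast_ne_zero.mpr (by omega)
  have ha : (0:ℝ) ≤ (1 + ((k:ℝ) - 1) * c) / k := by
    apply div_nonneg _ hkpos.le
    have h' : (-1 : ℝ) ≤ c * ((k:ℝ) - 1) := (div_le_iff₀ hk1).mp hc1
    nlinarith
  have hb : (0:ℝ) ≤ (1 - c) / (2 * k) := by
    apply div_nonneg (by linarith) (by linarith)
  set e : Fin n → Fin k → ℂ := fun i a => if π i = a then 1 else 0 with he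
  have h1 : ∀ i : Fin n, ∑ a, e i a = 1 := by
    intro i; simp [he]
  have h2 : ∀ i j : Fin n, ∑ a, e i a * e j a = if π i = π j then 1 else 0 := by
    intro i j
    rw [Finset.sum_eq_single (π i)]
    · simp [he, eq_comm]
    · intro b _ hb'
      simp [he, Ne.symm hb']
    · simp
  set D : Fin k × Fin k → Matrix (Fin n) (Fin n) ℂ :=
    fun p => Matrix.diagonal (fun i => e i p.1 - e i p.2) with hD
  have key : (Matrix.of fun i j => if π i = π j then A i j else (c : ℂ) * A i j)
      = (((1 + ((k:ℝ) - 1) * c) / k : ℝ) : ℂ) • A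
        + (((1 - c) / (2 * k) : ℝ) : ℂ) • ∑ p : Fin k × Fin k, D p * A * D p := by
    ext i j
    have hsum : ∑ p : Fin k × Fin k, (D p * A * D p) i j
        = (2 * (k:ℂ) * (if π i = π j then 1 else 0) - 2) * A i j := by
      have hent : ∀ p : Fin k × Fin k, (D p * A * D p) i j
          = ((e i p.1 - e i p.2) * (e j p.1 - e j p.2)) * A i j := by
        intro p
        simp only [hD, Matrix.diagonal_mul, Matrix.mul_diagonal]
        ring
      simp_rw [hent, ← Finset.sum_mul]
      congr 1
      rw [Fintype.sum_prod_type]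
      have expand : ∀ a b : Fin k, (e i a - e i b) * (e j a - e j b)
          = e i a * e j a + e i b * e j b - (e i a * e j b + e i b * e j a) := by
        intros; ring
      simp_rw [expand]
      have inner : ∀ a : Fin k,
          ∑ b, (e i a * e j a + e i b * e j b - (e i a * e j b + e i b * e j a))
          = (k:ℂ) * (e i a * e j a) + (if π i = π j then 1 else 0)
            - (e i a + e j a) := by
        intro a
        rw [Finset.sum_sub_distrib, Finset.sum_add_distrib, Finset.sum_add_distrib,
            Finset.sum_const, ← Finset.mul_sum, ← Finset.sum_mul, h1, h1, h2]
        simp [Finset.card_univ, nsmul_eq_mul]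
      simp_rw [inner]
      rw [Finset.sum_sub_distrib, Finset.sum_add_distrib, Finset.sum_add_distrib,
          ← Finset.mul_sum, h2, h1, h1, Finset.sum_const, Finset.card_univ,
          Fintype.card_fin, nsmul_eq_mul]
      ring
    simp only [Matrix.add_apply, Matrix.smul_apply, Matrix.of_apply, Matrix.sum_apply, hsum, smul_eq_mul]
    push_cast
    by_cases hij : π i = π j
    · simp only [hij, if_pos rfl, if_true]
      field_simp
      ring
    · simp only [hij, if_false]
      field_simp
      ring
  rw [key]
  refine (psd_real_smul _ ha hA).add (psd_real_smul _ hb (psd_sum _ _ fun p _ => ?_))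
  have hDH : (D p)ᴴ = D p := by
    rw [hD]
    rw [Matrix.diagonal_conjTranspose]
    apply congrArg
    funext i
    have hstar : ∀ a, star (e i a) = e i a := by
      intro a
      simp only [he]
      split <;> simp
    rw [Pi.star_apply, star_sub, hstar, hstar]
  have := hA.mul_mul_conjTranspose_same (D p)
  rwa [hDH] at this
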